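/- arXiv:2311.11939 — 3 statements merged into one kernel-verified Lean document; each statement's English description precedes it below -/
import Mathlib

section
/- Let Y be a gamma random variable with shape parameter k₁ + k₂ and rate λ > 0, and let Z be a beta random variable with parameters k₁ and k₂, independent of Y, where k₁, k₂ > 0. Then the product Z·Y is a gamma random variable with shape parameter k₁ and rate λ. -/
open MeasureTheory ProbabilityTheory

/-- The Beta function `B(a, b) = Γ(a) Γ(b) / Γ(a + b)`. -/
noncomputable def betaFun (a b : ℝ) : ℝ :=
  Real.Gamma a * Real.Gamma b / Real.Gamma (a + b)

/-- The probability density function of the beta distribution with parameters `a, b`,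
supported on `[0, 1]`. -/
noncomputable def betaPDFReal (a b x : ℝ) : ℝ :=
  if 0 ≤ x ∧ x ≤ 1 then x ^ (a - 1) * (1 - x) ^ (b - 1) / betaFun a b else 0

/-- The beta distribution (measure) with parameters `a, b`. -/
noncomputable def betaMeasure (a b : ℝ) : Measure ℝ :=
  volume.withDensity (fun x => ENNReal.ofReal (_root_.betaPDFReal a b x))

open Real Set

section Aux

lemma my_lintegral_image_eq {s : Set ℝ} {f f' : ℝ → ℝ} (hs : MeasurableSet s)
    (hf' : ∀ x ∈ s, HasDerivWithinAt f (f' x) s x) (hf : Set.InjOn f s) (g : ℝ → ENNReal) :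
    ∫⁻ x in f '' s, g x = ∫⁻ x in s, ENNReal.ofReal |f' x| * g (f x) := by
  simpa only [ContinuousLinearMap.det_toSpanSingleton] using
    MeasureTheory.lintegral_image_eq_lintegral_abs_det_fderiv_mul volume hs
      (fun x hx => (hf' x hx).hasFDerivWithinAt) hf g

lemma my_lintegral_rpow_exp {b r : ℝ} (hb : 0 < b) (hr : 0 < r) :
    ∫⁻ t in Ioi (0:ℝ), ENNReal.ofReal (t ^ (b - 1) * Real.exp (-(r * t)))
      = ENNReal.ofReal ((1 / r) ^ b * Real.Gamma b) := by
  rw [← integral_rpow_mul_exp_neg_mul_Ioi hb hr,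
    ← ofReal_integral_eq_lintegral_ofReal]
  · have := integrableOn_rpow_mul_exp_neg_mul_rpow (p := 1) (s := b - 1) (by linarith) one_pos hr
    simp only [Real.rpow_one] at this
    exact this.congr_fun (fun x _ => by simp only [neg_mul]) measurableSet_Ioi
  · filter_upwards [self_mem_ae_restrict measurableSet_Ioi] with t ht
    have ht' : (0:ℝ) < t := ht
    positivity

lemma my_gamma_map {a r c : ℝ} (hr : 0 < r) (hc : 0 < c) :
    (gammaMeasure a r).map (fun y => c * y) = gammaMeasure a (r / c) := by
  ext s hs
  have hpre : MeasurableSet ((fun y => c * y) ⁻¹' s) := hs.preimage (measurable_const_mul c)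
  rw [Measure.map_apply (measurable_const_mul c) hs, gammaMeasure, gammaMeasure,
    withDensity_apply _ hpre, withDensity_apply _ hs]
  have himg : (fun y => c * y) '' ((fun y => c * y) ⁻¹' s) = s :=
    Set.image_preimage_eq _ (fun x => ⟨x / c, by field_simp⟩)
  have key : ∫⁻ x in s, gammaPDF a (r / c) x
      = ∫⁻ y in (fun y => c * y) ⁻¹' s, ENNReal.ofReal |c| * gammaPDF a (r / c) (c * y) := by
    conv_lhs => rw [← himg]
    exact my_lintegral_image_eq (f' := fun _ => c) hpre
      (fun y _ => by simpa using ((hasDerivAt_id y).const_mul c).hasDerivWithinAt)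
      ((mul_right_injective₀ hc.ne').injOn) (gammaPDF a (r / c))
  rw [key]
  refine setLIntegral_congr_fun hpre (fun y _ => ?_)
  rcases le_or_gt 0 y with hy | hy
  · rw [gammaPDF_of_nonneg hy, gammaPDF_of_nonneg (by positivity),
      ← ENNReal.ofReal_mul (abs_nonneg c)]
    congr 1
    rw [abs_of_pos hc, Real.div_rpow hr.le hc.le, Real.mul_rpow hc.le hy,
      Real.rpow_sub hc, Real.rpow_one, show r / c * (c * y) = r * y by field_simp]
    rw [show c * (r ^ a / c ^ a / Real.Gamma a * (c ^ a / c * y ^ (a - 1)) * Real.exp (-(r * y)))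
        = (c / c) * (c ^ a / c ^ a) * (r ^ a / Real.Gamma a * y ^ (a - 1) * Real.exp (-(r * y)))
        from by ring,
      div_self hc.ne', div_self (Real.rpow_pos_of_pos hc a).ne', one_mul, one_mul]
  · rw [gammaPDF_of_neg hy, gammaPDF_of_neg (by nlinarith), mul_zero]

lemma inner_key {k₁ k₂ lam : ℝ} (hk₁ : 0 < k₁) (hk₂ : 0 < k₂) (hlam : 0 < lam)
    {x : ℝ} (hx : 0 < x) :
    ∫⁻ z in Ioo (0:ℝ) 1, ENNReal.ofReal (_root_.betaPDFReal k₁ k₂ z) * gammaPDF (k₁ + k₂) (lam / z) x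
      = gammaPDF k₁ lam x := by
  have hG1 : 0 < Real.Gamma k₁ := Real.Gamma_pos_of_pos hk₁
  have hG2 : 0 < Real.Gamma k₂ := Real.Gamma_pos_of_pos hk₂
  have hGK : 0 < Real.Gamma (k₁ + k₂) := Real.Gamma_pos_of_pos (by linarith)
  have hB : 0 < betaFun k₁ k₂ := div_pos (mul_pos hG1 hG2) hGK
  set C : ℝ := lam ^ (k₁ + k₂) * x ^ (k₁ - 1) / (betaFun k₁ k₂ * Real.Gamma (k₁ + k₂)) with hC
  have hCpos : 0 < C := by positivity
  set f : ℝ → ℝ := fun z => x * z⁻¹ - x with hf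
  set f' : ℝ → ℝ := fun z => x * (-(z ^ 2)⁻¹) with hf'
  set g : ℝ → ENNReal := fun t =>
    ENNReal.ofReal (C * (t ^ (k₂ - 1) * Real.exp (-(lam * (t + x))))) with hg
  have hderiv : ∀ z ∈ Ioo (0:ℝ) 1, HasDerivWithinAt f (f' z) (Ioo (0:ℝ) 1) z :=
    fun z hz => (((hasDerivAt_inv (ne_of_gt hz.1)).const_mul x).sub_const x).hasDerivWithinAt
  have hinj : Set.InjOn f (Ioo (0:ℝ) 1) := by
    intro z₁ _ z₂ _ h
    have h' : x * z₁⁻¹ = x * z₂⁻¹ := by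
      have := sub_left_inj.mp h
      exact this
    exact inv_injective (mul_left_cancel₀ hx.ne' h')
  have himg : f '' Ioo (0:ℝ) 1 = Ioi 0 := by
    ext t
    constructor
    · rintro ⟨z, ⟨hz0, hz1⟩, rfl⟩
      have : f z = x * (1 - z) / z := by
        rw [eq_div_iff hz0.ne']; show (x * z⁻¹ - x) * z = _
        rw [sub_mul, mul_assoc, inv_mul_cancel₀ hz0.ne']; ring
      rw [this]
      have h1 : 0 < 1 - z := by linarith
      exact mem_Ioi.mpr (by positivity)
    · intro ht
      have ht' : (0:ℝ) < t := ht
      refine ⟨x / (x + t), ⟨by positivity, (div_lt_one (by positivity)).mpr (by linarith)⟩, ?_⟩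
      show x * (x / (x + t))⁻¹ - x = t
      rw [inv_div]
      field_simp
      ring
  -- pointwise identification of the integrand
  have hpt : ∀ z ∈ Ioo (0:ℝ) 1,
      ENNReal.ofReal (_root_.betaPDFReal k₁ k₂ z) * gammaPDF (k₁ + k₂) (lam / z) x
        = ENNReal.ofReal |f' z| * g (f z) := by
    intro z hz
    obtain ⟨hz0, hz1⟩ := hz
    have h1z : 0 < 1 - z := by linarith
    rw [hg, gammaPDF_of_nonneg hx.le, _root_.betaPDFReal, if_pos ⟨hz0.le, hz1.le⟩,
      ← ENNReal.ofReal_mul (div_nonneg (by positivity) hB.le),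
      ← ENNReal.ofReal_mul (abs_nonneg _)]
    congr 1
    have habs : |f' z| = x / z ^ 2 := by
      rw [hf']
      rw [abs_of_nonpos (by simp; positivity), show -(x * (-(z ^ 2)⁻¹)) = x / z ^ 2 by ring]
    have hfz : f z = x * (1 - z) / z := by
      rw [eq_div_iff hz0.ne']; show (x * z⁻¹ - x) * z = _
      rw [sub_mul, mul_assoc, inv_mul_cancel₀ hz0.ne']; ring
    rw [habs, hfz]
    have hfz_pow : (x * (1 - z) / z) ^ (k₂ - 1)
        = x ^ (k₂ - 1) * (1 - z) ^ (k₂ - 1) / z ^ (k₂ - 1) := by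
      rw [Real.div_rpow (by positivity) hz0.le, Real.mul_rpow hx.le h1z.le]
    have hexp : lam * (x * (1 - z) / z + x) = lam / z * x := by
      rw [show x * (1 - z) / z + x = x / z from by field_simp; ring]
      ring
    have hlamK : (lam / z) ^ (k₁ + k₂) = lam ^ (k₁ + k₂) / z ^ (k₁ + k₂) :=
      Real.div_rpow hlam.le hz0.le _
    have hxK : x ^ (k₁ + k₂ - 1) = x ^ (k₁ - 1) * x ^ (k₂ - 1) * x := by
      rw [show k₁ + k₂ - 1 = (k₁ - 1) + ((k₂ - 1) + 1) by ring, Real.rpow_add hx,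
        Real.rpow_add hx, Real.rpow_one, mul_assoc]
    have hzK : z ^ (k₁ + k₂) = z ^ (k₁ - 1) * z ^ (k₂ - 1) * (z * z) := by
      rw [show k₁ + k₂ = (k₁ - 1) + ((k₂ - 1) + (1 + 1)) by ring, Real.rpow_add hz0,
        Real.rpow_add hz0, Real.rpow_add hz0, Real.rpow_one, mul_assoc]
    rw [hfz_pow, hexp, hlamK, hxK, hzK, hC]
    have hzk1 : (0:ℝ) < z ^ (k₁ - 1) := Real.rpow_pos_of_pos hz0 _
    have hzk2 : (0:ℝ) < z ^ (k₂ - 1) := Real.rpow_pos_of_pos hz0 _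
    field_simp
  rw [setLIntegral_congr_fun measurableSet_Ioo hpt,
    ← my_lintegral_image_eq measurableSet_Ioo hderiv hinj g, himg]
  -- evaluate the Gamma integral
  have hsplit : ∀ t : ℝ, C * (t ^ (k₂ - 1) * Real.exp (-(lam * (t + x))))
      = (C * Real.exp (-(lam * x))) * (t ^ (k₂ - 1) * Real.exp (-(lam * t))) := by
    intro t
    rw [show -(lam * (t + x)) = -(lam * t) + -(lam * x) by ring, Real.exp_add]
    ring
  simp only [hg, hsplit]
  simp_rw [ENNReal.ofReal_mul (by positivity : (0:ℝ) ≤ C * Real.exp (-(lam * x)))]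
  rw [lintegral_const_mul' _ _ ENNReal.ofReal_ne_top, my_lintegral_rpow_exp hk₂ hlam,
    ← ENNReal.ofReal_mul (by positivity), gammaPDF_of_nonneg hx.le]
  congr 1
  rw [hC, betaFun, Real.rpow_add hlam, one_div, Real.inv_rpow hlam.le]
  have h1 : (0:ℝ) < lam ^ k₂ := Real.rpow_pos_of_pos hlam _
  field_simp

end Aux

/-- beta-thinned gamma random variable.  Let `Y` be a gamma random
variable with shape parameter `k₁ + k₂` and rate `lam > 0`, and let `Z` be a beta random
variable with parameters `k₁` and `k₂`, independent of `Y`, where `k₁, k₂ > 0`.  Then the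
product `Z * Y` is a gamma random variable with shape parameter `k₁` and rate `lam`. -/
theorem beta_thinned_gamma
    {Ω : Type*} [MeasurableSpace Ω] (P : Measure Ω) [IsProbabilityMeasure P]
    (Y Z : Ω → ℝ) (k₁ k₂ lam : ℝ)
    (hk₁ : 0 < k₁) (hk₂ : 0 < k₂) (hlam : 0 < lam)
    (hY : Measurable Y) (hZ : Measurable Z)
    (hindep : IndepFun Z Y P)
    (hdY : P.map Y = gammaMeasure (k₁ + k₂) lam)
    (hdZ : P.map Z = _root_.betaMeasure k₁ k₂) :
    P.map (fun ω => Z ω * Y ω) = gammaMeasure k₁ lam := by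
  haveI : IsProbabilityMeasure (gammaMeasure (k₁ + k₂) lam) :=
    isProbabilityMeasure_gammaMeasure (by linarith) hlam
  have hmm : Measurable (fun p : ℝ × ℝ => p.1 * p.2) := measurable_fst.mul measurable_snd
  have hbm : Measurable (_root_.betaPDFReal k₁ k₂) := by
    unfold _root_.betaPDFReal
    apply Measurable.ite
    · exact (measurableSet_le measurable_const measurable_id).inter
        (measurableSet_le measurable_id measurable_const)
    · exact ((measurable_id.pow_const (k₁ - 1)).mul
        ((measurable_const.sub measurable_id).pow_const (k₂ - 1))).div_const _
    · exact measurable_const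
  have step1 : P.map (fun ω => Z ω * Y ω)
      = ((_root_.betaMeasure k₁ k₂).prod (gammaMeasure (k₁ + k₂) lam)).map
          (fun p : ℝ × ℝ => p.1 * p.2) := by
    have hpair : P.map (fun ω => (Z ω, Y ω)) = (P.map Z).prod (P.map Y) :=
      (indepFun_iff_map_prod_eq_prod_map_map hZ.aemeasurable hY.aemeasurable).mp hindep
    rw [← hdZ, ← hdY, ← hpair, Measure.map_map hmm (hZ.prodMk hY)]
    rfl
  rw [step1]
  ext s hs
  have hT : MeasurableSet ((fun p : ℝ × ℝ => p.1 * p.2) ⁻¹' s) := hmm hs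
  rw [Measure.map_apply hmm hs, Measure.prod_apply hT, _root_.betaMeasure,
    lintegral_withDensity_eq_lintegral_mul _ hbm.ennreal_ofReal
      (measurable_measure_prodMk_left hT)]
  set G : ℝ → ENNReal :=
    fun z => gammaMeasure (k₁ + k₂) lam (Prod.mk z ⁻¹' ((fun p : ℝ × ℝ => p.1 * p.2) ⁻¹' s))
    with hG
  have hsupp : ∀ z ∉ Icc (0:ℝ) 1, ENNReal.ofReal (_root_.betaPDFReal k₁ k₂ z) * G z = 0 := by
    intro z hz
    rw [_root_.betaPDFReal, if_neg (by simpa [Set.mem_Icc] using hz), ENNReal.ofReal_zero, zero_mul]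
  have hred : ∫⁻ z, ENNReal.ofReal (_root_.betaPDFReal k₁ k₂ z) * G z
      = ∫⁻ z in Ioo (0:ℝ) 1, ENNReal.ofReal (_root_.betaPDFReal k₁ k₂ z) * G z := by
    calc ∫⁻ z, ENNReal.ofReal (_root_.betaPDFReal k₁ k₂ z) * G z
        = ∫⁻ z, (Icc (0:ℝ) 1).indicator
            (fun z => ENNReal.ofReal (_root_.betaPDFReal k₁ k₂ z) * G z) z := by
          refine lintegral_congr fun z => ?_
          by_cases hz : z ∈ Icc (0:ℝ) 1
          · rw [Set.indicator_of_mem hz]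
          · rw [Set.indicator_of_notMem hz, hsupp z hz]
      _ = ∫⁻ z in Icc (0:ℝ) 1, ENNReal.ofReal (_root_.betaPDFReal k₁ k₂ z) * G z :=
          lintegral_indicator measurableSet_Icc _
      _ = ∫⁻ z in Ioo (0:ℝ) 1, ENNReal.ofReal (_root_.betaPDFReal k₁ k₂ z) * G z :=
          (setLIntegral_congr Ioo_ae_eq_Icc).symm
  simp only [Pi.mul_apply]
  rw [hred]
  have hGz : ∀ z ∈ Ioo (0:ℝ) 1, ENNReal.ofReal (_root_.betaPDFReal k₁ k₂ z) * G z
      = ∫⁻ x in s, ENNReal.ofReal (_root_.betaPDFReal k₁ k₂ z) * gammaPDF (k₁ + k₂) (lam / z) x := by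
    intro z hz
    have h3 : G z = ((gammaMeasure (k₁ + k₂) lam).map (fun y => z * y)) s := by
      rw [Measure.map_apply (measurable_const_mul z) hs]
      rfl
    rw [h3, my_gamma_map hlam hz.1, gammaMeasure, withDensity_apply _ hs,
      ← lintegral_const_mul' _ _ ENNReal.ofReal_ne_top]
  rw [setLIntegral_congr_fun measurableSet_Ioo hGz]
  have hgm : Measurable (fun p : ℝ × ℝ => gammaPDF (k₁ + k₂) (lam / p.1) p.2) := by
    simp only [gammaPDF_eq]
    apply Measurable.ennreal_ofReal
    apply Measurable.ite (measurable_snd measurableSet_Ici)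
    · exact ((((measurable_const.div measurable_fst).pow_const _).div_const _).mul
        (measurable_snd.pow_const _)).mul
        (((measurable_const.div measurable_fst).mul measurable_snd).neg.exp)
    · exact measurable_const
  have hmeas : AEMeasurable
      (Function.uncurry fun z x =>
        ENNReal.ofReal (_root_.betaPDFReal k₁ k₂ z) * gammaPDF (k₁ + k₂) (lam / z) x)
      ((volume.restrict (Ioo (0:ℝ) 1)).prod (volume.restrict s)) :=
    (((hbm.comp measurable_fst).ennreal_ofReal).mul hgm).aemeasurable
  rw [lintegral_lintegral_swap hmeas]
  have hae : ∀ᵐ x ∂(volume.restrict s),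
      (∫⁻ z in Ioo (0:ℝ) 1,
        ENNReal.ofReal (_root_.betaPDFReal k₁ k₂ z) * gammaPDF (k₁ + k₂) (lam / z) x)
        = gammaPDF k₁ lam x := by
    have h0 : (volume.restrict s) {(0:ℝ)} = 0 := by
      rw [Measure.restrict_apply (measurableSet_singleton 0)]
      exact measure_mono_null Set.inter_subset_left (measure_singleton 0)
    filter_upwards [compl_mem_ae_iff.mpr h0] with x hx
    rcases lt_trichotomy x 0 with hneg | hzero | hpos
    · rw [gammaPDF_of_neg hneg,
        setLIntegral_congr_fun measurableSet_Ioo (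
          (fun z _ => by rw [gammaPDF_of_neg hneg, mul_zero] :
            ∀ z ∈ Ioo (0:ℝ) 1, ENNReal.ofReal (_root_.betaPDFReal k₁ k₂ z)
              * gammaPDF (k₁ + k₂) (lam / z) x = 0)),
        lintegral_zero]
    · exact absurd (Set.mem_singleton_iff.mpr hzero) hx
    · exact inner_key hk₁ hk₂ hlam hpos
  rw [lintegral_congr_ae hae, ← withDensity_apply _ hs]
  rfl
end

section
/- Fix μ > 0 and for k > 1 let H(k) = k + log Γ(k) + (1−k)ψ(k) − log(k/μ) be the differential entropy of the gamma random variable with shape parameter k and rate λ = k/μ (so that the mean equals μ), where ψ = (log Γ)′ is the digamma function. Then H is strictly decreasing on (1, ∞); that is, H′(k) = 1 + ψ′(k)(1−k) − 1/k < 0 for all k > 1. -/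
open MeasureTheory Real

/-- The digamma function `ψ = (log Γ)′`. -/
noncomputable def digamma (x : ℝ) : ℝ :=
  deriv (fun t : ℝ => Real.log (Real.Gamma t)) x

/-- The trigamma function `ψ′`. -/
noncomputable def trigamma (x : ℝ) : ℝ :=
  deriv digamma x

section Aux

open Real Filter Set Topology Finset

/-- The real Gamma function is analytic at positive points. -/
lemma analyticAt_Gamma_aux {x : ℝ} (hx : 0 < x) : AnalyticAt ℝ Real.Gamma x := by
  have h1 : AnalyticAt ℂ Complex.Gamma (x : ℂ) := by
    apply DifferentiableOn.analyticAt (s := {z : ℂ | 0 < z.re})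
    · intro z hz
      refine (Complex.differentiableAt_Gamma z fun m => ?_).differentiableWithinAt
      intro h
      rw [h] at hz
      simp only [Set.mem_setOf_eq, Complex.neg_re, Complex.natCast_re] at hz
      have : (0 : ℝ) ≤ (m : ℝ) := Nat.cast_nonneg m
      linarith
    · exact (isOpen_lt continuous_const Complex.continuous_re).mem_nhds (by simpa using hx)
  have h2 : AnalyticAt ℝ (fun t : ℝ => (Complex.Gamma (t : ℂ)).re) x := by
    exact (Complex.reCLM.analyticAt _).comp
      ((h1.restrictScalars).comp (Complex.ofRealCLM.analyticAt x))
  refine h2.congr ?_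
  filter_upwards with t
  rw [Complex.Gamma_ofReal, Complex.ofReal_re]

lemma contDiffAt_logGamma_aux {x : ℝ} (hx : 0 < x) {n : WithTop ℕ∞} :
    ContDiffAt ℝ n (fun t : ℝ => Real.log (Real.Gamma t)) x :=
  (analyticAt_Gamma_aux hx).contDiffAt.log (Real.Gamma_pos_of_pos hx).ne'

lemma differentiableAt_logGamma_aux {x : ℝ} (hx : 0 < x) :
    DifferentiableAt ℝ (fun t : ℝ => Real.log (Real.Gamma t)) x :=
  (contDiffAt_logGamma_aux hx (n := 1)).differentiableAt (by norm_num)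

lemma hasDerivAt_logGamma_aux {x : ℝ} (hx : 0 < x) :
    HasDerivAt (fun t : ℝ => Real.log (Real.Gamma t)) (digamma x) x :=
  (differentiableAt_logGamma_aux hx).hasDerivAt

lemma differentiableAt_digamma {x : ℝ} (hx : 0 < x) : DifferentiableAt ℝ digamma x := by
  have h := (contDiffAt_logGamma_aux hx (n := 2)).fderiv_right (m := 1) (by norm_num)
  have h2 : ContDiffAt ℝ 1
      (fun t : ℝ => fderiv ℝ (fun t : ℝ => Real.log (Real.Gamma t)) t 1) x :=
    h.clm_apply contDiffAt_const
  have heq : digamma = fun t : ℝ => fderiv ℝ (fun t : ℝ => Real.log (Real.Gamma t)) t 1 :=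
    funext fun t => (fderiv_apply_one_eq_deriv).symm
  rw [heq]
  exact h2.differentiableAt (by norm_num)

lemma hasDerivAt_digamma {x : ℝ} (hx : 0 < x) : HasDerivAt digamma (trigamma x) x :=
  (differentiableAt_digamma hx).hasDerivAt

/-- Recursion for digamma: `ψ(x+1) = ψ(x) + 1/x`. -/
lemma digamma_add_one {x : ℝ} (hx : 0 < x) : digamma (x + 1) = digamma x + 1 / x := by
  show deriv (fun t : ℝ => Real.log (Real.Gamma t)) (x + 1)
    = deriv (fun t : ℝ => Real.log (Real.Gamma t)) x + 1 / x
  rw [← deriv_comp_add_const, one_div, ← Real.deriv_log,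
    ← deriv_fun_add (differentiableAt_logGamma_aux hx) (Real.differentiableAt_log hx.ne')]
  apply Filter.EventuallyEq.deriv_eq
  filter_upwards [eventually_gt_nhds hx] with y hy
  rw [Real.Gamma_add_one hy.ne', Real.log_mul hy.ne' (Real.Gamma_pos_of_pos hy).ne', add_comm]

/-- Recursion for trigamma: `ψ′(x) = 1/x² + ψ′(x+1)`. -/
lemma trigamma_add_one {x : ℝ} (hx : 0 < x) : trigamma x = 1 / x ^ 2 + trigamma (x + 1) := by
  have h : trigamma (x + 1) = trigamma x - 1 / x ^ 2 := by
    show deriv digamma (x + 1) = _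
    rw [← deriv_comp_add_const]
    have heq : (fun y : ℝ => digamma (y + 1)) =ᶠ[𝓝 x] fun y : ℝ => digamma y + y⁻¹ := by
      filter_upwards [eventually_gt_nhds hx] with y hy
      rw [digamma_add_one hy, one_div]
    rw [heq.deriv_eq, deriv_fun_add (differentiableAt_digamma hx) (differentiableAt_inv hx.ne'),
      deriv_inv]
    have hdd : deriv digamma x = trigamma x := rfl
    rw [hdd]
    ring
  rw [h]; ring

lemma trigamma_sum (N : ℕ) : ∀ x : ℝ, 0 < x →
    trigamma x = (∑ n ∈ Finset.range N, 1 / (x + n) ^ 2) + trigamma (x + N) := by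
  induction N with
  | zero => intro x hx; simp
  | succ N ih =>
    intro x hx
    rw [trigamma_add_one hx, ih (x + 1) (by linarith), Finset.sum_range_succ']
    push_cast
    have h1 : x + 1 + (N : ℝ) = x + ((N : ℝ) + 1) := by ring
    rw [h1]
    have h2 : ∀ n ∈ Finset.range N, 1 / (x + 1 + (n : ℝ)) ^ 2 = 1 / (x + ((n : ℝ) + 1)) ^ 2 :=
      fun n _ => by ring
    rw [Finset.sum_congr rfl h2]
    ring

lemma trigamma_nonneg {x : ℝ} (hx : 0 < x) : 0 ≤ trigamma x := by
  have hmono : MonotoneOn digamma (Set.Ioi (0 : ℝ)) := by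
    have h := Real.convexOn_log_Gamma.monotoneOn_deriv
      (fun y hy => differentiableAt_logGamma_aux (Set.mem_Ioi.mp hy))
    exact h
  have hd := hasDerivAt_digamma hx
  rw [hasDerivAt_iff_tendsto_slope] at hd
  have hle : 𝓝[>] x ≤ 𝓝[≠] x := nhdsWithin_mono x fun y hy => ne_of_gt hy
  refine ge_of_tendsto (hd.mono_left hle) ?_
  filter_upwards [self_mem_nhdsWithin] with y hy
  rw [slope_def_field]
  have hy' : x < y := hy
  apply div_nonneg
  · exact sub_nonneg.mpr (hmono (Set.mem_Ioi.mpr hx) (Set.mem_Ioi.mpr (hx.trans hy')) hy'.le)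
  · linarith

lemma one_div_lt_trigamma {x : ℝ} (hx : 0 < x) : 1 / x < trigamma x := by
  obtain ⟨N, hN⟩ := exists_nat_gt (x ^ 2 * (x + 1))
  have hx1 : (0 : ℝ) < x + 1 := by linarith
  -- lower bound the sum for trigamma (x+1)
  have hsum : (∑ n ∈ Finset.range N, (1 / (x + 1 + (n : ℝ)) - 1 / (x + 1 + (n : ℝ) + 1)))
      ≤ ∑ n ∈ Finset.range N, 1 / (x + 1 + (n : ℝ)) ^ 2 := by
    apply Finset.sum_le_sum
    intro n _
    have ha : (0 : ℝ) < x + 1 + n := by positivity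
    have ha1 : (0 : ℝ) < x + 1 + n + 1 := by linarith
    rw [div_sub_div _ _ ha.ne' ha1.ne', div_le_div_iff₀ (by positivity) (by positivity)]
    ring_nf
    nlinarith [sq_nonneg (x + 1 + (n : ℝ))]
  have htel : (∑ n ∈ Finset.range N, (1 / (x + 1 + (n : ℝ)) - 1 / (x + 1 + (n : ℝ) + 1)))
      = 1 / (x + 1) - 1 / (x + 1 + N) := by
    have := Finset.sum_range_sub' (fun n : ℕ => 1 / (x + 1 + (n : ℝ))) N
    simp only [Nat.cast_zero, add_zero, Nat.cast_add, Nat.cast_one] at this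
    rw [← this]
    apply Finset.sum_congr rfl
    intro n _
    ring_nf
  have h1 : trigamma (x + 1) ≥ 1 / (x + 1) - 1 / (x + 1 + N) := by
    rw [trigamma_sum N (x + 1) hx1]
    have h0 : 0 ≤ trigamma (x + 1 + N) := trigamma_nonneg (by positivity)
    have : ∀ n ∈ Finset.range N, 1 / ((x + 1) + (n : ℝ)) ^ 2 = 1 / (x + 1 + (n : ℝ)) ^ 2 := by
      intro n _; ring_nf
    rw [Finset.sum_congr rfl this]
    linarith [htel ▸ hsum]
  have h2 : trigamma x = 1 / x ^ 2 + trigamma (x + 1) := trigamma_add_one hx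
  have h3 : 1 / (x + 1 + N) < 1 / (x ^ 2 * (x + 1)) := by
    apply one_div_lt_one_div_of_lt (by positivity)
    linarith
  have e : 1 / x ^ 2 + 1 / (x + 1) - 1 / (x ^ 2 * (x + 1)) = 1 / x := by
    field_simp
    ring
  linarith

lemma hasDerivAt_H (μ : ℝ) (hμ : 0 < μ) {k : ℝ} (hk : 1 < k) :
    HasDerivAt
      (fun k : ℝ =>
        k + Real.log (Real.Gamma k) + (1 - k) * digamma k - Real.log (k / μ))
      (1 + trigamma k * (1 - k) - 1 / k) k := by
  have hk0 : (0 : ℝ) < k := by linarith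
  have h1 := hasDerivAt_logGamma_aux hk0
  have h2 := hasDerivAt_digamma hk0
  have h3 : HasDerivAt (fun t : ℝ => 1 - t) (-1) k := by
    simpa using (hasDerivAt_id k).const_sub 1
  have h4 : HasDerivAt (fun t : ℝ => (1 - t) * digamma t)
      ((-1) * digamma k + (1 - k) * trigamma k) k := h3.mul h2
  have h5 : HasDerivAt (fun t : ℝ => Real.log (t / μ)) (1 / k) k := by
    have hd : HasDerivAt (fun t : ℝ => t / μ) (1 / μ) k := by
      simpa using (hasDerivAt_id k).div_const μ
    have hne : k / μ ≠ 0 := by positivity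
    have := hd.log hne
    convert this using 1
    field_simp
  have := (((hasDerivAt_id' (x := k)).fun_add h1).fun_add h4).fun_sub h5
  exact this.congr_deriv (by ring)

end Aux

/-- Fix `μ > 0` and for `k > 1` let
`H k = k + log Γ(k) + (1 - k) ψ(k) - log (k / μ)` be the differential entropy of the gamma
random variable with shape parameter `k` and rate `λ = k / μ` (so that the mean equals
`μ`), where `ψ = (log Γ)′` is the digamma function.  Then `H` is strictly decreasing on
`(1, ∞)`; that is, `H′(k) = 1 + ψ′(k) (1 - k) - 1 / k < 0` for all `k > 1`. -/
theorem gamma_entropy_strictAntiOn (μ : ℝ) (hμ : 0 < μ) :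
    StrictAntiOn
      (fun k : ℝ =>
        k + Real.log (Real.Gamma k) + (1 - k) * digamma k - Real.log (k / μ))
      (Set.Ioi 1) ∧
    (∀ k : ℝ, 1 < k →
      HasDerivAt
        (fun k : ℝ =>
          k + Real.log (Real.Gamma k) + (1 - k) * digamma k - Real.log (k / μ))
        (1 + trigamma k * (1 - k) - 1 / k) k) ∧
    (∀ k : ℝ, 1 < k → 1 + trigamma k * (1 - k) - 1 / k < 0) := by
  have hneg : ∀ k : ℝ, 1 < k → 1 + trigamma k * (1 - k) - 1 / k < 0 := by
    intro k hk
    have hk0 : (0 : ℝ) < k := by linarith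
    have ht := one_div_lt_trigamma hk0
    have hlt : trigamma k * (1 - k) < (1 / k) * (1 - k) :=
      mul_lt_mul_of_neg_right ht (by linarith)
    have e : (1 / k) * (1 - k) = 1 / k - 1 := by field_simp
    linarith
  refine ⟨?_, fun k hk => hasDerivAt_H μ hμ hk, hneg⟩
  apply strictAntiOn_of_deriv_neg (convex_Ioi 1)
  · intro k hk
    exact (hasDerivAt_H μ hμ (Set.mem_Ioi.mp hk)).continuousAt.continuousWithinAt
  · intro k hk
    rw [interior_Ioi] at hk
    rw [(hasDerivAt_H μ hμ (Set.mem_Ioi.mp hk)).deriv]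
    exact hneg k (Set.mem_Ioi.mp hk)
end

section
/- Fix b > 0, ρ > 0 and v_c ≥ 0. For each integer n ≥ 3 let Z_n be a beta random variable with parameters 2b and (n−2)b. Then the shifted rescaled Voronoi lengths V_n = v_c + ((n−2)b/(2ρ)) Z_n converge in distribution, as n → ∞, to v_c + Y where Y is a gamma random variable with shape parameter 2b and rate 2ρ; the limiting density is the translated gamma density p(v) = (2ρ)^{2b}(v − v_c)^{2b−1} e^{−2ρ(v − v_c)} / Γ(2b) for v ≥ v_c, which equals the k-gamma distribution with k = 2b upon substituting 2ρ = k/(v̄ − v_c) with v̄ the mean of the limit. -/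
open MeasureTheory ProbabilityTheory Filter

section Aux

open Real

lemma gamma_ratio_upper {a β : ℝ} (ha : 0 < a) (ha1 : a ≤ 1) (hβ : 0 < β) :
    Real.Gamma (β + a) ≤ Real.Gamma β * β ^ a := by
  have h1 : (0:ℝ) < β + 1 := by linarith
  have hconv := Real.convexOn_log_Gamma.2 (Set.mem_Ioi.mpr hβ) (Set.mem_Ioi.mpr h1)
    (by linarith : (0:ℝ) ≤ 1 - a) ha.le (by ring)
  have hcomb : (1 - a) • β + a • (β + 1) = β + a := by simp [smul_eq_mul]; ring
  rw [hcomb] at hconv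
  simp only [Function.comp_apply, smul_eq_mul] at hconv
  have hΓβ := Real.Gamma_pos_of_pos hβ
  have hΓβa := Real.Gamma_pos_of_pos (by linarith : (0:ℝ) < β + a)
  have hΓβ1 := Real.Gamma_pos_of_pos h1
  have key : Real.Gamma (β + a) ≤ Real.Gamma β ^ (1-a) * Real.Gamma (β + 1) ^ a := by
    rw [rpow_def_of_pos hΓβ, rpow_def_of_pos hΓβ1, ← Real.exp_add, ← Real.exp_log hΓβa]
    exact Real.exp_le_exp.mpr
      (by rw [mul_comm (Real.log _) (1-a), mul_comm (Real.log _) a]; exact hconv)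
  calc Real.Gamma (β + a) ≤ Real.Gamma β ^ (1-a) * Real.Gamma (β + 1) ^ a := key
    _ = Real.Gamma β ^ (1-a) * (Real.Gamma β ^ a * β ^ a) := by
        rw [Real.Gamma_add_one hβ.ne', Real.mul_rpow hβ.le hΓβ.le]; ring
    _ = Real.Gamma β * β ^ a := by
        rw [← mul_assoc, ← Real.rpow_add hΓβ]; norm_num

lemma gamma_ratio_lower {a β : ℝ} (ha : 0 < a) (ha1 : a ≤ 1) (hβ : 0 < β) :
    Real.Gamma β * β ^ a * (β / (β + a)) ^ (1-a) ≤ Real.Gamma (β + a) := by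
  have hβa : (0:ℝ) < β + a := by linarith
  have hβa1 : (0:ℝ) < β + a + 1 := by linarith
  have hconv := Real.convexOn_log_Gamma.2 (Set.mem_Ioi.mpr hβa) (Set.mem_Ioi.mpr hβa1)
    ha.le (by linarith : (0:ℝ) ≤ 1 - a) (by ring)
  have hcomb : a • (β + a) + (1 - a) • (β + a + 1) = β + 1 := by simp [smul_eq_mul]; ring
  rw [hcomb] at hconv
  simp only [Function.comp_apply, smul_eq_mul] at hconv
  have hΓβ := Real.Gamma_pos_of_pos hβ
  have hΓβa := Real.Gamma_pos_of_pos hβa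
  have hΓβa1 := Real.Gamma_pos_of_pos hβa1
  have hΓβ1 := Real.Gamma_pos_of_pos (by linarith : (0:ℝ) < β + 1)
  have key : Real.Gamma (β + 1) ≤ Real.Gamma (β + a) ^ a * Real.Gamma (β + a + 1) ^ (1-a) := by
    rw [rpow_def_of_pos hΓβa, rpow_def_of_pos hΓβa1, ← Real.exp_add, ← Real.exp_log hΓβ1]
    exact Real.exp_le_exp.mpr
      (by rw [mul_comm (Real.log _) a, mul_comm (Real.log _) (1-a)]; exact hconv)
  have key2 : β * Real.Gamma β ≤ Real.Gamma (β + a) * (β + a) ^ (1-a) := by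
    calc β * Real.Gamma β = Real.Gamma (β + 1) := (Real.Gamma_add_one hβ.ne').symm
      _ ≤ Real.Gamma (β + a) ^ a * Real.Gamma (β + a + 1) ^ (1-a) := key
      _ = Real.Gamma (β + a) ^ a * (Real.Gamma (β + a) ^ (1-a) * (β + a) ^ (1-a)) := by
          rw [Real.Gamma_add_one hβa.ne', Real.mul_rpow hβa.le hΓβa.le]; ring
      _ = Real.Gamma (β + a) * (β + a) ^ (1-a) := by
          rw [← mul_assoc, ← Real.rpow_add hΓβa]; norm_num
  have hpow : Real.Gamma β * β ^ a * (β / (β + a)) ^ (1-a) * (β + a) ^ (1-a)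
      = β * Real.Gamma β := by
    rw [Real.div_rpow hβ.le hβa.le]
    field_simp
    rw [← Real.rpow_add hβ, show a + (1 - a) = 1 by ring, Real.rpow_one]
  have hpos : (0:ℝ) < (β + a) ^ (1-a) := Real.rpow_pos_of_pos hβa _
  nlinarith [key2, hpos]

lemma gamma_ratio_tendsto_base {a : ℝ} (ha : 0 < a) (ha1 : a ≤ 1) :
    Tendsto (fun β : ℝ => Real.Gamma (β + a) / (Real.Gamma β * β ^ a)) atTop (nhds 1) := by
  have hlow : Tendsto (fun β : ℝ => (β / (β + a)) ^ (1-a)) atTop (nhds 1) := by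
    have h1 : Tendsto (fun β : ℝ => β / (β + a)) atTop (nhds 1) := by
      have h2 : Tendsto (fun β : ℝ => 1 - a / (β + a)) atTop (nhds (1 - 0)) :=
        tendsto_const_nhds.sub (Tendsto.div_atTop tendsto_const_nhds
          (tendsto_atTop_add_const_right _ a tendsto_id))
      rw [sub_zero] at h2
      refine h2.congr' ?_
      filter_upwards [eventually_gt_atTop (0:ℝ)] with β hβ
      have : β + a ≠ 0 := by positivity
      field_simp
      ring
    have := h1.rpow_const (p := 1 - a) (Or.inl one_ne_zero)
    simpa using this
  refine tendsto_of_tendsto_of_tendsto_of_le_of_le' hlow tendsto_const_nhds ?_ ?_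
  · filter_upwards [eventually_gt_atTop (0:ℝ)] with β hβ
    have hpos : (0:ℝ) < Real.Gamma β * β ^ a :=
      mul_pos (Real.Gamma_pos_of_pos hβ) (Real.rpow_pos_of_pos hβ _)
    rw [le_div_iff₀ hpos, mul_comm]
    exact gamma_ratio_lower ha ha1 hβ
  · filter_upwards [eventually_gt_atTop (0:ℝ)] with β hβ
    have hpos : (0:ℝ) < Real.Gamma β * β ^ a :=
      mul_pos (Real.Gamma_pos_of_pos hβ) (Real.rpow_pos_of_pos hβ _)
    rw [div_le_one hpos]
    exact gamma_ratio_upper ha ha1 hβ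

lemma gamma_ratio_tendsto {a : ℝ} (ha : 0 < a) :
    Tendsto (fun β : ℝ => Real.Gamma (β + a) / (Real.Gamma β * β ^ a)) atTop (nhds 1) := by
  obtain ⟨n, hn⟩ : ∃ n : ℕ, a ≤ n := ⟨⌈a⌉₊, Nat.le_ceil a⟩
  induction n generalizing a with
  | zero => exact absurd (ha.trans_le hn) (by norm_num)
  | succ n ih =>
    by_cases ha1 : a ≤ 1
    · exact gamma_ratio_tendsto_base ha ha1
    · push_neg at ha1
      have ha' : 0 < a - 1 := by linarith
      have hn' : a - 1 ≤ n := by push_cast at hn ⊢; linarith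
      have hrec := ih ha' hn'
      have hlin : Tendsto (fun β : ℝ => (β + (a - 1)) / β) atTop (nhds 1) := by
        have h2 : Tendsto (fun β : ℝ => 1 + (a-1) / β) atTop (nhds (1 + 0)) :=
          tendsto_const_nhds.add (Tendsto.div_atTop tendsto_const_nhds tendsto_id)
        rw [add_zero] at h2
        refine h2.congr' ?_
        filter_upwards [eventually_gt_atTop (0:ℝ)] with β hβ
        field_simp
      have hmul := hrec.mul hlin
      rw [mul_one] at hmul
      refine hmul.congr' ?_
      filter_upwards [eventually_gt_atTop (0:ℝ)] with β hβ
      have hβa : (0:ℝ) < β + (a - 1) := by linarith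
      have h1 : Real.Gamma (β + a) = (β + (a-1)) * Real.Gamma (β + (a-1)) := by
        rw [show β + a = (β + (a-1)) + 1 by ring, Real.Gamma_add_one hβa.ne']
      have h2 : β ^ a = β ^ (a-1) * β := by
        rw [show a = (a-1) + 1 by ring, Real.rpow_add_one hβ.ne']
        ring_nf
      rw [h1, h2]
      have hΓβ := (Real.Gamma_pos_of_pos hβ).ne'
      have hβp := (Real.rpow_pos_of_pos hβ (a-1)).ne'
      field_simp

lemma tendsto_one_sub_div_rpow_exp (t : ℝ) :
    Tendsto (fun β : ℝ => (1 - t / β) ^ (β - 1)) atTop (nhds (Real.exp (-t))) := by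
  have h1 : Tendsto (fun β : ℝ => (1 + (-t) / β) ^ β) atTop (nhds (Real.exp (-t))) :=
    tendsto_one_add_div_rpow_exp (-t)
  have h2 : Tendsto (fun β : ℝ => 1 + (-t) / β) atTop (nhds (1 + 0)) :=
    tendsto_const_nhds.add (Tendsto.div_atTop tendsto_const_nhds tendsto_id)
  rw [add_zero] at h2
  have h3 := h1.div h2 one_ne_zero
  rw [div_one] at h3
  refine h3.congr' ?_
  filter_upwards [eventually_gt_atTop (max 0 (2 * |t|))] with β hβ
  have hβ0 : 0 < β := lt_of_le_of_lt (le_max_left _ _) hβ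
  have hβt : 2 * |t| < β := lt_of_le_of_lt (le_max_right _ _) hβ
  have habs : |t| / β < 1 := by
    rw [div_lt_one hβ0]
    have := abs_nonneg t
    linarith
  have hbase : 0 < 1 + (-t) / β := by
    have h4 : |(-t) / β| < 1 := by
      rw [abs_div, abs_of_pos hβ0, abs_neg]; exact habs
    have := neg_lt_of_abs_lt h4
    linarith
  have heq : (1 : ℝ) + (-t) / β = 1 - t / β := by ring
  simp only [Pi.div_apply]
  rw [heq] at hbase
  rw [heq, Real.rpow_sub hbase, Real.rpow_one]

lemma betaFun_pos {a b : ℝ} (ha : 0 < a) (hb : 0 < b) : 0 < betaFun a b :=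
  div_pos (mul_pos (Real.Gamma_pos_of_pos ha) (Real.Gamma_pos_of_pos hb))
    (Real.Gamma_pos_of_pos (by linarith))

lemma betaPDFReal_nonneg {a b : ℝ} (ha : 0 < a) (hb : 0 < b) (x : ℝ) :
    0 ≤ _root_.betaPDFReal a b x := by
  unfold _root_.betaPDFReal
  split_ifs with h
  · exact div_nonneg (mul_nonneg (Real.rpow_nonneg h.1 _)
      (Real.rpow_nonneg (by linarith [h.2]) _)) (betaFun_pos ha hb).le
  · exact le_refl 0

lemma measurable_betaPDFReal (a b : ℝ) : Measurable (_root_.betaPDFReal a b) := by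
  unfold _root_.betaPDFReal
  refine Measurable.ite ?_ ?_ measurable_const
  · exact measurableSet_Icc (a := (0:ℝ)) (b := 1)
  · exact ((measurable_id.pow_const _).mul
      ((measurable_const.sub measurable_id).pow_const _)).div_const _

lemma beta_pdf_identity {a lam β y : ℝ} (ha : 0 < a) (hl : 0 < lam) (hβ : 0 < β)
    (hy : 0 ≤ y) (hy1 : y / (β / lam) ≤ 1) :
    _root_.betaPDFReal a β (y / (β / lam)) / (β / lam)
      = (Real.Gamma (β + a) / (Real.Gamma β * β ^ a))
        * (lam ^ a * y ^ (a - 1) * (1 - lam * y / β) ^ (β - 1) / Real.Gamma a) := by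
  have hc : 0 < β / lam := div_pos hβ hl
  have hz : y / (β / lam) = lam * y / β := by
    rw [div_div_eq_mul_div, mul_comm]
  rw [_root_.betaPDFReal, if_pos ⟨div_nonneg hy hc.le, hy1⟩, hz]
  have e1 : (lam * y / β) ^ (a - 1) = lam ^ (a-1) * y ^ (a-1) / β ^ (a-1) := by
    rw [Real.div_rpow (mul_nonneg hl.le hy) hβ.le, Real.mul_rpow hl.le hy]
  have e2 : lam ^ a = lam ^ (a-1) * lam := by
    rw [show a = (a-1) + 1 by ring, Real.rpow_add_one hl.ne']; ring_nf
  have e3 : β ^ a = β ^ (a-1) * β := by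
    rw [show a = (a-1) + 1 by ring, Real.rpow_add_one hβ.ne']; ring_nf
  rw [e1, e2, e3, betaFun, add_comm a β]
  have hΓa := (Real.Gamma_pos_of_pos ha).ne'
  have hΓβ := (Real.Gamma_pos_of_pos hβ).ne'
  have hΓβa := (Real.Gamma_pos_of_pos (by linarith : (0:ℝ) < β + a)).ne'
  have hβp := (Real.rpow_pos_of_pos hβ (a-1)).ne'
  have hlp := (Real.rpow_pos_of_pos hl (a-1)).ne'
  field_simp

set_option maxHeartbeats 1000000 in
lemma toReal_withDensity_Iic {f : ℝ → ℝ} (hm : Measurable f) (hnn : ∀ y, 0 ≤ f y)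
    (hneg : ∀ y, y < 0 → f y = 0) (t : ℝ) :
    ((volume.withDensity fun y => ENNReal.ofReal (f y)) (Set.Iic t)).toReal
      = ∫ y in Set.Ioc 0 t, f y := by
  have h1 : ((volume.withDensity fun y => ENNReal.ofReal (f y)) (Set.Iic t)).toReal
      = ∫ y in Set.Iic t, f y := by
    rw [withDensity_apply _ measurableSet_Iic]
    exact (integral_eq_lintegral_of_nonneg_ae (Filter.Eventually.of_forall hnn)
      hm.aestronglyMeasurable).symm
  rw [h1]
  refine setIntegral_eq_of_subset_of_ae_diff_eq_zero measurableSet_Iic.nullMeasurableSet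
    Set.Ioc_subset_Iic_self ?_
  have h0 : ∀ᵐ z : ℝ, z ≠ (0:ℝ) := by
    have hset : {z : ℝ | ¬ z ≠ 0} = {0} := by ext z; simp
    rw [ae_iff, hset]
    exact measure_singleton 0
  filter_upwards [h0] with z hz hmem
  obtain ⟨hzt, hnot⟩ := hmem
  refine hneg z ?_
  rcases lt_or_ge z 0 with h | h
  · exact h
  · exact absurd ⟨lt_of_le_of_ne h (Ne.symm hz), hzt⟩ hnot

lemma setIntegral_Ioc_comp_div (g : ℝ → ℝ) {c : ℝ} (hc : 0 < c) (s : ℝ) :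
    ∫ z in Set.Ioc 0 (s / c), g z = ∫ y in Set.Ioc 0 s, g (y / c) / c := by
  rcases le_or_gt s 0 with hs | hs
  · have h1 : s / c ≤ 0 := div_nonpos_of_nonpos_of_nonneg hs hc.le
    rw [Set.Ioc_eq_empty (not_lt.mpr h1), Set.Ioc_eq_empty (not_lt.mpr hs)]
    simp
  · have hsc : (0:ℝ) ≤ s / c := (div_pos hs hc).le
    rw [← intervalIntegral.integral_of_le hsc, ← intervalIntegral.integral_of_le hs.le]
    have h := intervalIntegral.integral_comp_div (a := 0) (b := s) g hc.ne'
    rw [zero_div] at h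
    rw [intervalIntegral.integral_div, h, smul_eq_mul, mul_div_cancel_left₀ _ hc.ne']

lemma beta_to_gamma_cdf {a lam : ℝ} (ha : 0 < a) (hl : 0 < lam) (v_c : ℝ)
    (B : ℕ → ℝ) (hB : Tendsto B atTop atTop) (x : ℝ) :
    Tendsto (fun n : ℕ =>
        (((_root_.betaMeasure a (B n)).map (fun z => v_c + (B n / lam) * z)) (Set.Iic x)).toReal)
      atTop
      (nhds ((((gammaMeasure a lam).map (fun y => v_c + y)) (Set.Iic x)).toReal)) := by
  set s := x - v_c with hs_def
  have hΓa := Real.Gamma_pos_of_pos ha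
  -- RHS as an integral
  have hmap_meas : Measurable fun y : ℝ => v_c + y := measurable_const.add measurable_id
  have hpre : (fun y : ℝ => v_c + y) ⁻¹' (Set.Iic x) = Set.Iic s := by
    ext y
    simp only [Set.mem_preimage, Set.mem_Iic]
    constructor <;> intro h <;> [skip; skip] <;> simp only [hs_def] at * <;> linarith
  have hRHS : (((gammaMeasure a lam).map (fun y => v_c + y)) (Set.Iic x)).toReal
      = ∫ y in Set.Ioc 0 s, gammaPDFReal a lam y := by
    rw [Measure.map_apply hmap_meas measurableSet_Iic, hpre]
    have : gammaMeasure a lam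
        = volume.withDensity fun y => ENNReal.ofReal (gammaPDFReal a lam y) := rfl
    rw [this]
    exact toReal_withDensity_Iic (measurable_gammaPDFReal a lam)
      (gammaPDFReal_nonneg ha hl)
      (fun y hy => by rw [gammaPDFReal, if_neg (not_le.mpr hy)]) s
  -- LHS as an integral, for suitable n
  have hLHS : ∀ n : ℕ, 1 ≤ B n →
      (((_root_.betaMeasure a (B n)).map (fun z => v_c + (B n / lam) * z)) (Set.Iic x)).toReal
        = ∫ y in Set.Ioc 0 s, _root_.betaPDFReal a (B n) (y / (B n / lam)) / (B n / lam) := by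
    intro n hBn
    have hβ0 : 0 < B n := lt_of_lt_of_le one_pos hBn
    have hc : 0 < B n / lam := div_pos hβ0 hl
    have hmeas : Measurable fun z : ℝ => v_c + (B n / lam) * z :=
      measurable_const.add (measurable_id.const_mul _)
    have hpre2 : (fun z : ℝ => v_c + (B n / lam) * z) ⁻¹' (Set.Iic x)
        = Set.Iic (s / (B n / lam)) := by
      ext z
      simp only [Set.mem_preimage, Set.mem_Iic]
      rw [le_div_iff₀ hc]
      have hcomm : z * (B n / lam) = (B n / lam) * z := mul_comm _ _
      rw [hcomm]
      constructor <;> intro h <;> simp only [hs_def] at * <;> linarith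
    rw [Measure.map_apply hmeas measurableSet_Iic, hpre2, _root_.betaMeasure,
      toReal_withDensity_Iic (_root_.measurable_betaPDFReal a (B n))
        (_root_.betaPDFReal_nonneg ha hβ0)
        (fun y hy => by rw [_root_.betaPDFReal, if_neg (fun hmem => absurd hmem.1 (not_le.mpr hy))]) _]
    exact setIntegral_Ioc_comp_div (_root_.betaPDFReal a (B n)) hc s
  -- ratio sequence
  have hratio : Tendsto (fun n => Real.Gamma (B n + a) / (Real.Gamma (B n) * (B n) ^ a))
      atTop (nhds 1) := (gamma_ratio_tendsto ha).comp hB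
  have hev : ∀ᶠ n in atTop,
      Real.Gamma (B n + a) / (Real.Gamma (B n) * (B n) ^ a) ≤ 2 ∧ 1 ≤ B n :=
    (hratio.eventually (eventually_le_nhds one_lt_two)).and (hB.eventually_ge_atTop 1)
  obtain ⟨N, hN⟩ := eventually_atTop.mp hev
  rw [hRHS, ← tendsto_add_atTop_iff_nat N]
  have hDCT : Tendsto
      (fun n : ℕ => ∫ y in Set.Ioc 0 s,
        _root_.betaPDFReal a (B (n + N)) (y / (B (n + N) / lam)) / (B (n + N) / lam))
      atTop (nhds (∫ y in Set.Ioc 0 s, gammaPDFReal a lam y)) := by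
    refine tendsto_integral_of_dominated_convergence
      (fun y => 2 * lam ^ a / Real.Gamma a * y ^ (a - 1)) ?_ ?_ ?_ ?_
    · intro n
      exact (((_root_.measurable_betaPDFReal a (B (n + N))).comp
        (measurable_id.div_const _)).div_const _).aestronglyMeasurable
    · rcases le_or_gt s 0 with hs | hs
      · rw [Set.Ioc_eq_empty (not_lt.mpr hs), Measure.restrict_empty]
        exact integrable_zero_measure
      · have h := intervalIntegral.intervalIntegrable_rpow' (a := 0) (b := s)
          (by linarith : (-1:ℝ) < a - 1)
        rw [intervalIntegrable_iff_integrableOn_Ioc_of_le hs.le] at h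
        exact h.const_mul _
    · intro n
      rw [ae_restrict_iff' measurableSet_Ioc]
      refine Filter.Eventually.of_forall fun y hy => ?_
      obtain ⟨hy0, hys⟩ := hy
      obtain ⟨hr2, hβ1⟩ := hN (n + N) (Nat.le_add_left N n)
      have hβ0 : 0 < B (n + N) := lt_of_lt_of_le one_pos hβ1
      have hc : 0 < B (n + N) / lam := div_pos hβ0 hl
      have hboundnn : 0 ≤ 2 * lam ^ a / Real.Gamma a * y ^ (a - 1) :=
        mul_nonneg (div_nonneg (by positivity) hΓa.le) (Real.rpow_nonneg hy0.le _)
      rw [Real.norm_eq_abs, abs_of_nonneg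
        (div_nonneg (_root_.betaPDFReal_nonneg ha hβ0 _) hc.le)]
      by_cases hle : y / (B (n + N) / lam) ≤ 1
      · rw [beta_pdf_identity ha hl hβ0 hy0.le hle]
        have hzle : lam * y / B (n + N) ≤ 1 := by
          have heq : y / (B (n + N) / lam) = lam * y / B (n + N) := by
            rw [div_div_eq_mul_div, mul_comm y lam]
          rwa [heq] at hle
        have hznn : 0 ≤ lam * y / B (n + N) := by positivity
        have hW1 : (1 - lam * y / B (n + N)) ^ (B (n + N) - 1) ≤ 1 :=
          Real.rpow_le_one (by linarith) (by linarith) (by linarith)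
        have hWnn : 0 ≤ (1 - lam * y / B (n + N)) ^ (B (n + N) - 1) :=
          Real.rpow_nonneg (by linarith) _
        have hXnn : 0 ≤ lam ^ a * y ^ (a - 1) := by
          exact mul_nonneg (Real.rpow_pos_of_pos hl a).le (Real.rpow_nonneg hy0.le _)
        have h2 : lam ^ a * y ^ (a - 1) * (1 - lam * y / B (n + N)) ^ (B (n + N) - 1)
            / Real.Gamma a ≤ lam ^ a * y ^ (a - 1) / Real.Gamma a := by
          have heq2 : lam ^ a * y ^ (a - 1) * (1 - lam * y / B (n + N)) ^ (B (n + N) - 1)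
              / Real.Gamma a
              = lam ^ a * y ^ (a - 1) / Real.Gamma a
                * (1 - lam * y / B (n + N)) ^ (B (n + N) - 1) := by ring
          rw [heq2]
          exact mul_le_of_le_one_right (div_nonneg hXnn hΓa.le) hW1
        have h3 : 0 ≤ lam ^ a * y ^ (a - 1)
            * (1 - lam * y / B (n + N)) ^ (B (n + N) - 1) / Real.Gamma a :=
          div_nonneg (mul_nonneg hXnn hWnn) hΓa.le
        calc Real.Gamma (B (n + N) + a) / (Real.Gamma (B (n + N)) * B (n + N) ^ a)
              * (lam ^ a * y ^ (a - 1) * (1 - lam * y / B (n + N)) ^ (B (n + N) - 1)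
                / Real.Gamma a)
            ≤ 2 * (lam ^ a * y ^ (a - 1)
                * (1 - lam * y / B (n + N)) ^ (B (n + N) - 1) / Real.Gamma a) :=
              mul_le_mul_of_nonneg_right hr2 h3
          _ ≤ 2 * (lam ^ a * y ^ (a - 1) / Real.Gamma a) := by linarith
          _ = 2 * lam ^ a / Real.Gamma a * y ^ (a - 1) := by ring
      · rw [_root_.betaPDFReal, if_neg (fun hmem => absurd hmem.2 hle), zero_div]
        exact hboundnn
    · rw [ae_restrict_iff' measurableSet_Ioc]
      refine Filter.Eventually.of_forall fun y hy => ?_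
      obtain ⟨hy0, hys⟩ := hy
      have hBshift : Tendsto (fun m => B (m + N)) atTop atTop :=
        hB.comp (tendsto_add_atTop_nat N)
      have hrshift : Tendsto
          (fun m => Real.Gamma (B (m + N) + a) / (Real.Gamma (B (m + N)) * B (m + N) ^ a))
          atTop (nhds 1) := hratio.comp (tendsto_add_atTop_nat N)
      have hW : Tendsto
          (fun m => (1 - lam * y / B (m + N)) ^ (B (m + N) - 1))
          atTop (nhds (Real.exp (-(lam * y)))) :=
        (tendsto_one_sub_div_rpow_exp (lam * y)).comp hBshift
      have hmain := hrshift.mul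
        (((tendsto_const_nhds (x := lam ^ a * y ^ (a - 1))).mul hW).div_const (Real.Gamma a))
      rw [one_mul] at hmain
      have hgoal : gammaPDFReal a lam y
          = lam ^ a * y ^ (a - 1) * Real.exp (-(lam * y)) / Real.Gamma a := by
        rw [gammaPDFReal, if_pos hy0.le]; ring
      rw [hgoal]
      refine hmain.congr' ?_
      filter_upwards [hBshift.eventually_ge_atTop (max (lam * s) 1)] with m hm
      have hβ1 : (1:ℝ) ≤ B (m + N) := le_trans (le_max_right _ _) hm
      have hβ0 : 0 < B (m + N) := lt_of_lt_of_le one_pos hβ1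
      have hls : lam * s ≤ B (m + N) := le_trans (le_max_left _ _) hm
      have hle : y / (B (m + N) / lam) ≤ 1 := by
        rw [div_div_eq_mul_div, mul_comm, div_le_one hβ0]
        have : lam * y ≤ lam * s := mul_le_mul_of_nonneg_left hys hl.le
        linarith
      exact (beta_pdf_identity ha hl hβ0 hy0.le hle).symm
  refine hDCT.congr fun n => (hLHS (n + N) (hN (n + N) (Nat.le_add_left N n)).2).symm

end Aux

/-- Fix `b > 0`, `ρ > 0` and `v_c ≥ 0`.  For each integer `n ≥ 3` let
`Z_n` be a beta random variable with parameters `2b` and `(n - 2) b`.  Then the shifted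
rescaled Voronoi lengths `V_n = v_c + ((n - 2) b / (2ρ)) Z_n` converge in distribution, as
`n → ∞`, to `v_c + Y` where `Y` is a gamma random variable with shape parameter `2b` and
rate `2ρ`; the limiting density is the translated gamma density
`p(v) = (2ρ)^{2b} (v - v_c)^{2b-1} e^{-2ρ(v - v_c)} / Γ(2b)` for `v ≥ v_c`, which equals
the `k`-gamma distribution with `k = 2b` upon substituting `2ρ = k / (v̄ - v_c)` where
`v̄ = v_c + 2b/(2ρ)` is the mean of the limit. -/
theorem shifted_voronoi_tendsto_translated_gamma
    (b ρ v_c : ℝ) (hb : 0 < b) (hρ : 0 < ρ) (hvc : 0 ≤ v_c) :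
    (∀ x : ℝ,
      Tendsto
        (fun n : ℕ =>
          (((_root_.betaMeasure (2 * b) (((n : ℝ) - 2) * b)).map
              (fun z => v_c + ((((n : ℝ) - 2) * b) / (2 * ρ)) * z)) (Set.Iic x)).toReal)
        atTop
        (nhds ((((gammaMeasure (2 * b) (2 * ρ)).map (fun y => v_c + y))
          (Set.Iic x)).toReal))) ∧
    ((gammaMeasure (2 * b) (2 * ρ)).map (fun y => v_c + y)
      = volume.withDensity (fun v => ENNReal.ofReal (gammaPDFReal (2 * b) (2 * ρ) (v - v_c)))) ∧
    (∀ v : ℝ, v_c ≤ v →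
      gammaPDFReal (2 * b) (2 * ρ) (v - v_c)
        = (2 * ρ) ^ (2 * b) * (v - v_c) ^ (2 * b - 1)
            * Real.exp (-(2 * ρ * (v - v_c))) / Real.Gamma (2 * b)) ∧
    (2 * ρ = (2 * b) / ((v_c + (2 * b) / (2 * ρ)) - v_c)) := by
  have ha : 0 < 2 * b := by linarith
  have hl : 0 < 2 * ρ := by linarith
  refine ⟨?_, ?_, ?_, ?_⟩
  · -- part 1
    intro x
    have hB : Tendsto (fun n : ℕ => ((n : ℝ) - 2) * b) atTop atTop := by
      have h1 : Tendsto (fun n : ℕ => (n : ℝ) - 2) atTop atTop := by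
        have := tendsto_atTop_add_const_right atTop (-2 : ℝ) tendsto_natCast_atTop_atTop
        refine this.congr fun n => ?_
        ring
      exact h1.atTop_mul_const hb
    exact beta_to_gamma_cdf ha hl v_c (fun n : ℕ => ((n : ℝ) - 2) * b) hB x
  · -- part 2
    have hmap_meas : Measurable fun y : ℝ => v_c + y := measurable_const.add measurable_id
    refine Measure.ext fun s hs => ?_
    rw [Measure.map_apply hmap_meas hs, withDensity_apply _ hs]
    have h1 : gammaMeasure (2 * b) (2 * ρ)
        = volume.withDensity fun y => ENNReal.ofReal (gammaPDFReal (2 * b) (2 * ρ) y) := rfl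
    rw [h1, withDensity_apply _ (hmap_meas hs)]
    have hg : Measurable fun v : ℝ => ENNReal.ofReal (gammaPDFReal (2 * b) (2 * ρ) (v - v_c)) :=
      ((measurable_gammaPDFReal _ _).comp (measurable_id.sub_const v_c)).ennreal_ofReal
    calc ∫⁻ y in (fun y => v_c + y) ⁻¹' s,
          ENNReal.ofReal (gammaPDFReal (2 * b) (2 * ρ) y) ∂volume
        = ∫⁻ y in (fun y => v_c + y) ⁻¹' s,
          ENNReal.ofReal (gammaPDFReal (2 * b) (2 * ρ) (v_c + y - v_c)) ∂volume := by
          congr 1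
          ext y
          rw [add_sub_cancel_left]
      _ = ∫⁻ v in s,
          ENNReal.ofReal (gammaPDFReal (2 * b) (2 * ρ) (v - v_c))
            ∂(volume.map fun y : ℝ => v_c + y) := by
          rw [setLIntegral_map hs hg hmap_meas]
      _ = ∫⁻ v in s, ENNReal.ofReal (gammaPDFReal (2 * b) (2 * ρ) (v - v_c)) ∂volume := by
          rw [map_add_left_eq_self volume v_c]
  · -- part 3
    intro v hv
    rw [gammaPDFReal, if_pos (by linarith : (0:ℝ) ≤ v - v_c)]
    ring
  · -- part 4
    have h1 : (v_c + (2 * b) / (2 * ρ)) - v_c = (2 * b) / (2 * ρ) := by ring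
    rw [h1]
    field_simp
end
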